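/- Let k ≥ 2 be an integer, let C be a linear code of length n over Z_k, let g be a positive integer, let v ∈ (Z_k)^n, let F be a field, and let y : (Z_k)^{g+1} → F be a family with y_b ≠ 0 for all b ∈ (Z_k)^{g+1}. Then 𝔍ac^{(g)}_{C,v}(y) = y_0^n · ∏_{ℓ ∈ Z_k\{0}} (y_{(0,…,0,ℓ)} / y_0)^{wt_ℓ(v)} · Jac^{(g)}_{C,v}(X), where the variables X are given by: X_{(k),(ℓ)} := y_{L_{(k)}} / y_0 for k ∈ {1,…,g} and ℓ ∈ Z_k\{0} (with L_{(k)} ∈ (Z_k)^{g+1} the vector with ℓ in position k and 0 elsewhere), and X_{K,L} := ∏_{K' ⊆ K} y_{L_{K'}}^{(-1)^{|K| - |K'|}} for K ∈ ([g+1] choose p) with 2 ≤ p ≤ g+1 and L ∈ (Z_k\{0})^p, the product over all subtuples K' of K including the empty tuple. -/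

import Mathlib

open scoped Classical

open Finset

section Helpers

variable {F : Type*} [Field F]

lemma zpow_sum_aux {a : F} (ha : a ≠ 0) {ι : Type*} (s : Finset ι) (e : ι → ℤ) :
    a ^ (∑ i ∈ s, e i) = ∏ i ∈ s, a ^ e i := by
  induction s using Finset.cons_induction with
  | empty => simp
  | cons i s hi ih => rw [Finset.sum_cons, Finset.prod_cons, zpow_add₀ ha, ih]

lemma prod_pow_card_fiber {α β M : Type*} [Fintype α] [Fintype β] [DecidableEq β]
    [CommMonoid M] (f : α → β) (y : β → M) :
    ∏ b : β, y b ^ (Finset.univ.filter (fun i => f i = b)).card = ∏ i, y (f i) := by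
  rw [← Finset.prod_fiberwise' Finset.univ f y]
  exact Finset.prod_congr rfl fun b _ => (Finset.prod_const (y b)).symm

/-- The interval sum of `(-1)^(|K'|-|K''|)` over `K'' ⊆ K' ⊆ S`. -/
lemma moebius_sum {ι : Type*} [DecidableEq ι] {S K : Finset ι} (hK : K ⊆ S) :
    (∑ K' ∈ S.powerset, if K ⊆ K' then ((-1 : ℤ)) ^ (K'.card - K.card) else 0)
      = if K = S then 1 else 0 := by
  rw [Finset.sum_ite, Finset.sum_const_zero, add_zero]
  rw [Finset.sum_nbij' (i := fun K' => K' \ K) (j := fun T => T ∪ K)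
      (t := (S \ K).powerset) (g := fun T => (-1 : ℤ) ^ T.card)]
  · rw [Finset.sum_powerset_neg_one_pow_card]
    congr 1
    rw [Finset.sdiff_eq_empty_iff_subset]
    rw [eq_iff_iff]
    constructor
    · intro h; exact Finset.Subset.antisymm hK h
    · intro h; exact h ▸ Finset.Subset.refl _
  · intro K' hK'
    simp only [Finset.mem_filter, Finset.mem_powerset] at hK' ⊢
    exact Finset.sdiff_subset_sdiff hK'.1 (Finset.Subset.refl _)
  · intro T hT
    simp only [Finset.mem_powerset] at hT
    simp only [Finset.mem_filter, Finset.mem_powerset]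
    constructor
    · exact Finset.union_subset (hT.trans (Finset.sdiff_subset)) hK
    · exact Finset.subset_union_right
  · intro K' hK'
    simp only [Finset.mem_filter, Finset.mem_powerset] at hK'
    exact Finset.sdiff_union_of_subset hK'.2
  · intro T hT
    simp only [Finset.mem_powerset] at hT
    rw [Finset.union_sdiff_cancel_right]
    exact Finset.disjoint_of_subset_left hT Finset.sdiff_disjoint
  · intro K' hK'
    simp only [Finset.mem_filter, Finset.mem_powerset] at hK'
    rw [Finset.card_sdiff_of_subset hK'.2]

end Helpers

section M2
variable {F : Type*} [Field F]

lemma moebius_prod {ι : Type*} [DecidableEq ι] (S : Finset ι) (f : Finset ι → F)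
    (hf : ∀ K, f K ≠ 0) :
    ∏ K' ∈ S.powerset, ∏ K'' ∈ K'.powerset, f K'' ^ ((-1:ℤ) ^ (K'.card - K''.card)) = f S := by
  have h1 : ∀ K' ∈ S.powerset,
      ∏ K'' ∈ K'.powerset, f K'' ^ ((-1:ℤ) ^ (K'.card - K''.card))
        = ∏ K'' ∈ S.powerset, f K'' ^ (if K'' ⊆ K' then ((-1:ℤ) ^ (K'.card - K''.card)) else 0) := by
    intro K' hK'
    rw [Finset.mem_powerset] at hK'
    have hps : K'.powerset = S.powerset.filter (fun K'' => K'' ⊆ K') := by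
      ext K''
      simp only [Finset.mem_powerset, Finset.mem_filter]
      exact ⟨fun h => ⟨h.trans hK', h⟩, fun h => h.2⟩
    rw [hps, Finset.prod_filter]
    apply Finset.prod_congr rfl; intro K'' _
    split <;> simp
  rw [Finset.prod_congr rfl h1, Finset.prod_comm]
  have h2 : ∀ K'' ∈ S.powerset,
      ∏ K' ∈ S.powerset, f K'' ^ (if K'' ⊆ K' then ((-1:ℤ) ^ (K'.card - K''.card)) else 0)
        = f K'' ^ (if K'' = S then (1:ℤ) else 0) := by
    intro K'' hK''
    rw [← zpow_sum_aux (hf K''), moebius_sum (Finset.mem_powerset.mp hK'')]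
  rw [Finset.prod_congr rfl h2]
  have h3 : ∀ K'' ∈ S.powerset, f K'' ^ (if K'' = S then (1:ℤ) else 0)
      = if K'' = S then f K'' else 1 := by
    intro K'' _; split <;> simp
  rw [Finset.prod_congr rfl h3, Finset.prod_ite_eq' S.powerset S f,
    if_pos (Finset.mem_powerset.mpr (Finset.Subset.refl S))]

end M2

section Key

variable {k : ℕ} {F : Type*} [Field F] {g : ℕ}

/-- Restriction of a vector to a subset of its coordinates. -/
def restr (a : Fin (g+1) → ZMod k) (K : Finset (Fin (g+1))) : Fin (g+1) → ZMod k :=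
  fun t => if t ∈ K then a t else 0

lemma restr_empty (a : Fin (g+1) → ZMod k) : restr a ∅ = 0 := by
  funext t; simp [restr]

lemma restr_support (a : Fin (g+1) → ZMod k) :
    restr a (Finset.univ.filter (fun t => a t ≠ 0)) = a := by
  funext t
  by_cases h : a t = 0 <;> simp [restr, h]

lemma restr_restr (a : Fin (g+1) → ZMod k) {K' K'' : Finset (Fin (g+1))} (h : K'' ⊆ K') :
    (fun i => if i ∈ K'' then restr a K' i else 0) = restr a K'' := by
  funext t
  by_cases ht : t ∈ K''
  · simp [restr, ht, h ht]
  · simp [restr, ht]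

lemma support_restr (a : Fin (g+1) → ZMod k) {K : Finset (Fin (g+1))}
    (hK : K ⊆ Finset.univ.filter (fun t => a t ≠ 0)) :
    Finset.univ.filter (fun t => restr a K t ≠ 0) = K := by
  ext t
  simp only [Finset.mem_filter, Finset.mem_univ, true_and, restr]
  by_cases ht : t ∈ K
  · have := hK ht
    simp only [Finset.mem_filter] at this
    simp [ht, this.2]
  · simp [ht]

lemma restr_ne_zero_iff (a : Fin (g+1) → ZMod k) {K : Finset (Fin (g+1))}
    (hK : K ⊆ Finset.univ.filter (fun t => a t ≠ 0)) (t : Fin (g+1)) :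
    restr a K t ≠ 0 ↔ t ∈ K := by
  have := support_restr a hK
  constructor
  · intro h
    have : t ∈ Finset.univ.filter (fun t => restr a K t ≠ 0) := by simp [h]
    rwa [support_restr a hK] at this
  · intro h
    have h2 := hK h
    simp only [Finset.mem_filter] at h2
    simp [restr, h, h2.2]

/-- The substituted variable value `W K' = ∏_{K'' ⊆ K'} y_{a|K''}^{(-1)^{|K'|-|K''|}}`. -/
noncomputable def Wfun (y : (Fin (g+1) → ZMod k) → F) (a : Fin (g+1) → ZMod k)
    (K' : Finset (Fin (g+1))) : F :=
  ∏ K'' ∈ K'.powerset, y (restr a K'') ^ ((-1:ℤ) ^ (K'.card - K''.card))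

lemma W_empty (y : (Fin (g+1) → ZMod k) → F) (a : Fin (g+1) → ZMod k) :
    Wfun y a ∅ = y 0 := by
  simp [Wfun, restr_empty]

lemma W_singleton (y : (Fin (g+1) → ZMod k) → F) (hy0 : y 0 ≠ 0)
    (a : Fin (g+1) → ZMod k) (t : Fin (g+1)) :
    Wfun y a {t} = y (restr a {t}) / y 0 := by
  have h : ({t} : Finset (Fin (g+1))).powerset = {∅, {t}} := by
    have := Finset.powerset_insert (∅ : Finset (Fin (g+1))) t
    simp only [insert_empty_eq, Finset.powerset_empty, Finset.image_singleton,
      Finset.insert_empty] at this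
    rw [this]
    rfl
  rw [Wfun, h]
  have hne : (∅ : Finset (Fin (g+1))) ∉ ({{t}} : Finset (Finset (Fin (g+1)))) := by
    simp only [Finset.mem_singleton]
    intro hc
    exact (Finset.singleton_ne_empty t) hc.symm
  rw [Finset.prod_insert hne, Finset.prod_singleton]
  simp only [Finset.card_singleton, Finset.card_empty, Nat.sub_zero, Nat.sub_self,
    pow_one, pow_zero, zpow_one, restr_empty]
  rw [zpow_neg_one, div_eq_mul_inv, mul_comm]

end Key

section KeyLemma

variable {k : ℕ} [NeZero k] {F : Type*} [Field F] {g : ℕ}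

lemma key_coord
    (y : (Fin (g+1) → ZMod k) → F) (hy : ∀ b, y b ≠ 0)
    (X : (Fin (g+1) → ZMod k) → F)
    (hX1 : ∀ (m : Fin g) (ℓ : ZMod k), ℓ ≠ 0 →
      X (fun i => if i = m.castSucc then ℓ else 0)
        = y (fun i => if i = m.castSucc then ℓ else 0) / y 0)
    (hX2 : ∀ b : Fin (g+1) → ZMod k,
      2 ≤ (Finset.univ.filter (fun i => b i ≠ 0)).card →
      X b = ∏ K' ∈ (Finset.univ.filter (fun i => b i ≠ 0)).powerset,
        y (fun i => if i ∈ K' then b i else 0)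
          ^ ((-1 : ℤ) ^ ((Finset.univ.filter (fun i => b i ≠ 0)).card - K'.card)))
    (a : Fin (g+1) → ZMod k) :
    y 0 * (if a (Fin.last g) = 0 then 1
        else y (fun t => if t = Fin.last g then a (Fin.last g) else 0) / y 0) *
      ∏ b ∈ Finset.univ.filter (fun b : Fin (g+1) → ZMod k =>
          b ≠ 0 ∧ ∀ t, b t ≠ 0 → a t = b t),
        (if ∀ j : Fin g, b j.castSucc = 0 then 1 else X b) = y a := by
  classical
  set S : Finset (Fin (g+1)) := Finset.univ.filter (fun t => a t ≠ 0) with hSdef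
  -- restriction to the last coordinate
  have hrs : restr a {Fin.last g} = fun t => if t = Fin.last g then a (Fin.last g) else 0 := by
    funext t
    by_cases ht : t = Fin.last g
    · subst ht; simp [restr]
    · simp [restr, ht]
  -- Step A : reindex the product over b by supports K'
  have hreindex :
      (∏ b ∈ Finset.univ.filter (fun b : Fin (g+1) → ZMod k =>
          b ≠ 0 ∧ ∀ t, b t ≠ 0 → a t = b t),
        (if ∀ j : Fin g, b j.castSucc = 0 then 1 else X b))
      = ∏ K' ∈ S.powerset.filter (fun K' => ¬ K' = ∅),
          (if ∀ j : Fin g, restr a K' j.castSucc = 0 then 1 else X (restr a K')) := by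
    apply Finset.prod_nbij' (i := fun b => Finset.univ.filter (fun t => b t ≠ 0))
      (j := restr a)
    · intro b hb
      simp only [Finset.mem_filter, Finset.mem_univ, true_and] at hb
      obtain ⟨hb0, hbc⟩ := hb
      simp only [Finset.mem_filter, Finset.mem_powerset]
      constructor
      · intro t ht
        simp only [Finset.mem_filter, Finset.mem_univ, true_and] at ht ⊢
        rw [hSdef]
        simp only [Finset.mem_filter, Finset.mem_univ, true_and]
        rw [hbc t ht]; exact ht
      · intro hc
        apply hb0
        funext t
        have : t ∉ Finset.univ.filter (fun t => b t ≠ 0) := by rw [hc]; simp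
        simp only [Finset.mem_filter, Finset.mem_univ, true_and, not_not] at this
        exact this
    · intro K' hK'
      simp only [Finset.mem_filter, Finset.mem_powerset] at hK'
      obtain ⟨hK'S, hK'ne⟩ := hK'
      simp only [Finset.mem_filter, Finset.mem_univ, true_and]
      constructor
      · intro hc
        obtain ⟨t, ht⟩ := Finset.nonempty_iff_ne_empty.mpr hK'ne
        have := (restr_ne_zero_iff a hK'S t).mpr ht
        rw [hc] at this
        exact this rfl
      · intro t ht
        have htK' := (restr_ne_zero_iff a hK'S t).mp ht
        have := hK'S htK'
        simp only [hSdef, Finset.mem_filter, Finset.mem_univ, true_and] at this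
        simp [restr, htK']
    · intro b hb
      simp only [Finset.mem_filter, Finset.mem_univ, true_and] at hb
      obtain ⟨hb0, hbc⟩ := hb
      funext t
      by_cases ht : b t = 0
      · simp [restr, ht]
      · have : t ∈ Finset.univ.filter (fun t => b t ≠ 0) := by simp [ht]
        simp only [restr, this, if_true]
        exact hbc t ht
    · intro K' hK'
      simp only [Finset.mem_filter, Finset.mem_powerset] at hK'
      exact support_restr a hK'.1
    · intro b hb
      simp only [Finset.mem_filter, Finset.mem_univ, true_and] at hb
      obtain ⟨hb0, hbc⟩ := hb
      have hba : restr a (Finset.univ.filter (fun t => b t ≠ 0)) = b := by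
        funext t
        by_cases ht : b t = 0
        · simp [restr, ht]
        · have : t ∈ Finset.univ.filter (fun t => b t ≠ 0) := by simp [ht]
          simp only [restr, this, if_true]
          exact hbc t ht
      rw [hba]
  -- Step B : T = W off the singleton {last}
  have hTW : ∀ K' ∈ S.powerset.filter (fun K' => ¬ K' = ∅),
      Wfun y a K'
        = (if ∀ j : Fin g, restr a K' j.castSucc = 0 then 1 else X (restr a K'))
          * (if K' = {Fin.last g} then Wfun y a {Fin.last g} else 1) := by
    intro K' hK'
    simp only [Finset.mem_filter, Finset.mem_powerset] at hK'
    obtain ⟨hK'S, hK'ne⟩ := hK'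
    by_cases hl : K' = {Fin.last g}
    · subst hl
      rw [if_pos, if_pos rfl, one_mul]
      intro j
      simp only [restr, Finset.mem_singleton]
      rw [if_neg]
      exact (Fin.castSucc_lt_last j).ne
    · rw [if_neg hl, mul_one]
      have hcond : ¬ (∀ j : Fin g, restr a K' j.castSucc = 0) := by
        intro hc
        have hsub : K' ⊆ {Fin.last g} := by
          intro t ht
          rcases Fin.eq_castSucc_or_eq_last t with ⟨j, rfl⟩ | rfl
          · exact absurd (hc j) ((restr_ne_zero_iff a hK'S _).mpr ht)
          · exact Finset.mem_singleton_self _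
        rcases Finset.subset_singleton_iff.mp hsub with h | h
        · exact hK'ne h
        · exact hl h
      rw [if_neg hcond]
      rcases Nat.lt_or_ge K'.card 2 with hc2 | hc2
      · -- singleton case
        have hc0 : K'.card ≠ 0 := by
          simpa [Finset.card_eq_zero] using hK'ne
        have hc1 : K'.card = 1 := by omega
        obtain ⟨t, rfl⟩ := Finset.card_eq_one.mp hc1
        have ht : t ≠ Fin.last g := fun h => hl (by rw [h])
        rcases Fin.eq_castSucc_or_eq_last t with ⟨m, rfl⟩ | h
        · have hta : a m.castSucc ≠ 0 := by
            have := hK'S (Finset.mem_singleton_self m.castSucc)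
            simp only [hSdef, Finset.mem_filter, Finset.mem_univ, true_and] at this
            exact this
          have hfun : restr a {m.castSucc}
              = (fun i => if i = m.castSucc then a m.castSucc else 0) := by
            funext i
            by_cases hi : i = m.castSucc
            · subst hi; simp [restr]
            · simp [restr, hi]
          rw [W_singleton y (hy 0) a, hfun, hX1 m _ hta]
        · exact absurd h ht
      · -- card ≥ 2 case
        have hsupp : Finset.univ.filter (fun t => restr a K' t ≠ 0) = K' :=
          support_restr a hK'S
        rw [hX2 (restr a K') (by rw [hsupp]; exact hc2)]
        simp only [hsupp]
        rw [Wfun]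
        apply Finset.prod_congr rfl
        intro K'' hmem
        rw [restr_restr a (Finset.mem_powerset.mp hmem)]
  -- Step C : Möbius
  have hWS : ∏ K' ∈ S.powerset, Wfun y a K' = y a := by
    have := moebius_prod S (fun K => y (restr a K)) (fun K => hy _)
    simp only [Wfun]
    rw [this]
    show y (restr a S) = y a
    rw [hSdef, restr_support]
  -- split the Möbius product
  rw [← Finset.prod_filter_mul_prod_filter_not S.powerset (fun K' => K' = ∅)
    (Wfun y a)] at hWS
  have hempty : S.powerset.filter (fun K' => K' = ∅) = {∅} := by
    ext K
    simp only [Finset.mem_filter, Finset.mem_powerset, Finset.mem_singleton]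
    exact ⟨fun h => h.2, fun h => ⟨h ▸ Finset.empty_subset S, h⟩⟩
  rw [hempty, Finset.prod_singleton, W_empty] at hWS
  rw [Finset.prod_congr rfl hTW, Finset.prod_mul_distrib,
    Finset.prod_ite_eq' (S.powerset.filter (fun K' => ¬ K' = ∅)) ({Fin.last g})
      (fun _ => Wfun y a {Fin.last g})] at hWS
  have hmem_iff : ({Fin.last g} ∈ S.powerset.filter (fun K' => ¬ K' = ∅))
      ↔ a (Fin.last g) ≠ 0 := by
    simp only [Finset.mem_filter, Finset.mem_powerset, Finset.singleton_subset_iff,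
      hSdef, Finset.mem_filter, Finset.mem_univ, true_and]
    constructor
    · intro h; exact h.1
    · intro h; exact ⟨h, Finset.singleton_ne_empty _⟩
  have hlf : (if ({Fin.last g} : Finset (Fin (g+1))) ∈
        S.powerset.filter (fun K' => ¬ K' = ∅) then Wfun y a {Fin.last g} else 1)
      = (if a (Fin.last g) = 0 then 1
        else y (fun t => if t = Fin.last g then a (Fin.last g) else 0) / y 0) := by
    by_cases h0 : a (Fin.last g) = 0
    · rw [if_neg (fun hc => (hmem_iff.mp hc) h0), if_pos h0]
    · rw [if_pos (hmem_iff.mpr h0), if_neg h0, W_singleton y (hy 0) a, hrs]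
  rw [hlf] at hWS
  rw [hreindex, ← hWS]
  ring

end KeyLemma

section GG
variable {k : ℕ} {F : Type*} [Field F] {g : ℕ}

noncomputable def Gfac (y : (Fin (g+1) → ZMod k) → F) (ℓ : ZMod k) : F :=
  if ℓ = 0 then 1 else y (fun t => if t = Fin.last g then ℓ else 0) / y 0

end GG


/-- The `g`-th homogeneous Jacobi polynomial `𝔍ac^{(g)}_{C,v}(y)`.  The sum ranges
over all `g`-tuples of (not necessarily distinct) codewords; for
`a : Fin (g+1) → R`, the exponent of `y a` is `n_a(u_1,…,u_g,v)`, the number of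
coordinates `i` with `(u_1 i, …, u_g i, v i) = a`. -/
noncomputable def JacHom {R : Type*} [CommRing R] [Fintype R] {A : Type*} [CommRing A]
    {n g : ℕ} (C : Submodule R (Fin n → R)) (v : Fin n → R)
    (y : (Fin (g+1) → R) → A) : A :=
  ∑ u : Fin g → ↥C, ∏ a : Fin (g+1) → R,
    y a ^ (Finset.univ.filter (fun i : Fin n =>
      (∀ j : Fin g, (u j : Fin n → R) i = a j.castSucc) ∧ v i = a (Fin.last g))).card

/-- The `g`-th inhomogeneous Jacobi polynomial `Jac^{(g)}_{C,v}(X)`.  A pair `(K,L)`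
with `K ∈ ([g+1] choose p)`, `L ∈ (R \ {0})^p` is encoded as the nonzero vector
`b : Fin (g+1) → R` with support `K` and values `L`; the convention
`X_{(g+1),(j)} = 1` is realised by replacing `X b` by `1` whenever the support of
`b` is contained in `{g+1}` (the last index).  The exponent of `X b` is
`n_L(u_{K_1},…,u_{K_p})` with `u_{g+1} := v`. -/
noncomputable def JacInhom {R : Type*} [CommRing R] [Fintype R] {A : Type*} [CommRing A]
    {n g : ℕ} (C : Submodule R (Fin n → R)) (v : Fin n → R)
    (X : (Fin (g+1) → R) → A) : A :=
  ∑ u : Fin g → ↥C, ∏ b ∈ Finset.univ.filter (fun b : Fin (g+1) → R => b ≠ 0),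
    (if ∀ j : Fin g, b j.castSucc = 0 then 1 else X b) ^
      (Finset.univ.filter (fun i : Fin n =>
        (∀ j : Fin g, b j.castSucc ≠ 0 → (u j : Fin n → R) i = b j.castSucc) ∧
        (b (Fin.last g) ≠ 0 → v i = b (Fin.last g)))).card

/-- **Theorem (HomoInhomo)**, over `Z_k` (`k ≥ 2`).  The homogeneous Jacobi polynomial is
obtained from the inhomogeneous one by the substitution
`X_{(k),(ℓ)} := y_{L_{(k)}} / y_0` (for `k ∈ [g]`, `ℓ ≠ 0`, where `L_{(k)}` has `ℓ`
in position `k` and `0` elsewhere) and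
`X_{K,L} := ∏_{K' ⊆ K} y_{L_{K'}}^{(-1)^{|K|-|K'|}}` for `|K| ≥ 2`, up to the factor
`y_0^n ∏_{ℓ ≠ 0} (y_{(0,…,0,ℓ)}/y_0)^{wt_ℓ(v)}`. -/
theorem homogeneous_eq_inhomogeneous_Zk
    (k : ℕ) (hk : 2 ≤ k) [NeZero k]
    {F : Type*} [Field F]
    {n g : ℕ} (hg : 0 < g)
    (C : Submodule (ZMod k) (Fin n → (ZMod k))) (v : Fin n → (ZMod k))
    (y : (Fin (g+1) → (ZMod k)) → F) (hy : ∀ b, y b ≠ 0)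
    (X : (Fin (g+1) → (ZMod k)) → F)
    (hX1 : ∀ (m : Fin g) (ℓ : (ZMod k)), ℓ ≠ 0 →
      X (fun i => if i = m.castSucc then ℓ else 0)
        = y (fun i => if i = m.castSucc then ℓ else 0) / y 0)
    (hX2 : ∀ b : Fin (g+1) → (ZMod k),
      2 ≤ (Finset.univ.filter (fun i => b i ≠ 0)).card →
      X b = ∏ K' ∈ (Finset.univ.filter (fun i => b i ≠ 0)).powerset,
        y (fun i => if i ∈ K' then b i else 0)
          ^ ((-1 : ℤ) ^ ((Finset.univ.filter (fun i => b i ≠ 0)).card - K'.card))) :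
    JacHom C v y
      = y 0 ^ n *
        (∏ ℓ ∈ Finset.univ.filter (fun ℓ : (ZMod k) => ℓ ≠ 0),
          (y (fun i => if i = Fin.last g then ℓ else 0) / y 0)
            ^ (Finset.univ.filter (fun i : Fin n => v i = ℓ)).card) *
        JacInhom C v X := by
  unfold JacHom JacInhom
  rw [Finset.mul_sum]
  apply Finset.sum_congr rfl
  intro u _
  set w : Fin n → (Fin (g+1) → ZMod k) :=
    fun i => Fin.snoc (fun j => (u j : Fin n → ZMod k) i) (v i) with hwdef
  have hwc : ∀ i (j : Fin g), w i j.castSucc = (u j : Fin n → ZMod k) i := by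
    intro i j; rw [hwdef]; exact Fin.snoc_castSucc _ _ _
  have hwl : ∀ i, w i (Fin.last g) = v i := by
    intro i; rw [hwdef]; exact Fin.snoc_last _ _
  -- LHS
  have hL : (∏ a : Fin (g+1) → ZMod k,
      y a ^ (Finset.univ.filter (fun i : Fin n =>
        (∀ j : Fin g, (u j : Fin n → ZMod k) i = a j.castSucc)
          ∧ v i = a (Fin.last g))).card)
      = ∏ i : Fin n, y (w i) := by
    rw [← prod_pow_card_fiber w y]
    apply Finset.prod_congr rfl
    intro a _
    congr 2
    apply Finset.filter_congr
    intro i _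
    constructor
    · rintro ⟨h1, h2⟩
      funext t
      refine Fin.lastCases ?_ ?_ t
      · rw [hwl]; exact h2
      · intro j; rw [hwc]; exact h1 j
    · intro h
      constructor
      · intro j; rw [← h, hwc]
      · rw [← h, hwl]
  -- y 0 ^ n
  have hy0 : y 0 ^ n = ∏ _i : Fin n, y 0 := by
    rw [Finset.prod_const, Finset.card_univ, Fintype.card_fin]
  -- weight factor
  have hwt : (∏ ℓ ∈ Finset.univ.filter (fun ℓ : ZMod k => ℓ ≠ 0),
        (y (fun i => if i = Fin.last g then ℓ else 0) / y 0)
          ^ (Finset.univ.filter (fun i : Fin n => v i = ℓ)).card)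
      = ∏ i : Fin n, Gfac y (v i) := by
    rw [Finset.prod_filter, ← prod_pow_card_fiber v (Gfac y)]
    apply Finset.prod_congr rfl
    intro ℓ _
    by_cases h0 : ℓ = 0
    · subst h0; simp [Gfac]
    · rw [if_pos h0]
      congr 1
      simp [Gfac, h0]
  -- inhomogeneous term
  have hR : (∏ b ∈ Finset.univ.filter (fun b : Fin (g+1) → ZMod k => b ≠ 0),
        (if ∀ j : Fin g, b j.castSucc = 0 then 1 else X b) ^
          (Finset.univ.filter (fun i : Fin n =>
            (∀ j : Fin g, b j.castSucc ≠ 0 → (u j : Fin n → ZMod k) i = b j.castSucc) ∧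
            (b (Fin.last g) ≠ 0 → v i = b (Fin.last g)))).card)
      = ∏ i : Fin n, ∏ b ∈ Finset.univ.filter (fun b : Fin (g+1) → ZMod k =>
          b ≠ 0 ∧ ∀ t, b t ≠ 0 → w i t = b t),
          (if ∀ j : Fin g, b j.castSucc = 0 then 1 else X b) := by
    have h1 : ∀ b ∈ Finset.univ.filter (fun b : Fin (g+1) → ZMod k => b ≠ 0),
        (if ∀ j : Fin g, b j.castSucc = 0 then 1 else X b) ^
          (Finset.univ.filter (fun i : Fin n =>
            (∀ j : Fin g, b j.castSucc ≠ 0 → (u j : Fin n → ZMod k) i = b j.castSucc) ∧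
            (b (Fin.last g) ≠ 0 → v i = b (Fin.last g)))).card
        = ∏ _i ∈ (Finset.univ.filter (fun i : Fin n =>
            (∀ j : Fin g, b j.castSucc ≠ 0 → (u j : Fin n → ZMod k) i = b j.castSucc) ∧
            (b (Fin.last g) ≠ 0 → v i = b (Fin.last g)))),
            (if ∀ j : Fin g, b j.castSucc = 0 then 1 else X b) := by
      intro b _
      rw [Finset.prod_const]
    rw [Finset.prod_congr rfl h1]
    apply Finset.prod_comm'
    intro b i
    simp only [Finset.mem_filter, Finset.mem_univ, true_and, and_true]
    constructor
    · rintro ⟨hb0, h1', h2'⟩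
      refine ⟨hb0, ?_⟩
      intro t ht
      refine Fin.lastCases ?_ ?_ t ht
      · intro ht'; rw [hwl]; exact h2' ht'
      · intro j ht'; rw [hwc]; exact h1' j ht'
    · rintro ⟨hb0, hc⟩
      refine ⟨hb0, ?_, ?_⟩
      · intro j hj; rw [← hwc i j]; exact hc _ hj
      · intro hl; rw [← hwl i]; exact hc _ hl
  have hRHS : (∏ i : Fin n, (y 0 * Gfac y (v i) *
      ∏ b ∈ Finset.univ.filter (fun b : Fin (g+1) → ZMod k =>
          b ≠ 0 ∧ ∀ t, b t ≠ 0 → w i t = b t),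
          (if ∀ j : Fin g, b j.castSucc = 0 then 1 else X b)))
      = y 0 ^ n *
        (∏ ℓ ∈ Finset.univ.filter (fun ℓ : ZMod k => ℓ ≠ 0),
          (y (fun i => if i = Fin.last g then ℓ else 0) / y 0)
            ^ (Finset.univ.filter (fun i : Fin n => v i = ℓ)).card) *
        (∏ b ∈ Finset.univ.filter (fun b : Fin (g+1) → ZMod k => b ≠ 0),
        (if ∀ j : Fin g, b j.castSucc = 0 then 1 else X b) ^
          (Finset.univ.filter (fun i : Fin n =>
            (∀ j : Fin g, b j.castSucc ≠ 0 → (u j : Fin n → ZMod k) i = b j.castSucc) ∧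
            (b (Fin.last g) ≠ 0 → v i = b (Fin.last g)))).card) := by
    rw [Finset.prod_mul_distrib, Finset.prod_mul_distrib, ← hy0, ← hwt, ← hR]
  have hmid : (∏ i : Fin n, y (w i))
      = ∏ i : Fin n, (y 0 * Gfac y (v i) *
        ∏ b ∈ Finset.univ.filter (fun b : Fin (g+1) → ZMod k =>
            b ≠ 0 ∧ ∀ t, b t ≠ 0 → w i t = b t),
            (if ∀ j : Fin g, b j.castSucc = 0 then 1 else X b)) := by
    apply Finset.prod_congr rfl
    intro i _
    have hkey := key_coord y hy X hX1 hX2 (w i)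
    have hG : Gfac y (v i) = (if (w i) (Fin.last g) = 0 then 1
        else y (fun t => if t = Fin.last g then (w i) (Fin.last g) else 0) / y 0) := by
      rw [hwl i]; rfl
    rw [hG]
    exact hkey.symm
  refine Eq.trans (b := ∏ i : Fin n, y (w i)) ?_ (Eq.trans hmid ?_)
  · rw [← prod_pow_card_fiber w y]
    refine Finset.prod_congr rfl ?_
    intro a _
    congr 1
    refine congrArg Finset.card ?_
    ext i
    simp only [Finset.mem_filter, Finset.mem_univ, true_and]
    constructor
    · rintro ⟨h1, h2⟩
      funext t
      refine Fin.lastCases ?_ ?_ t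
      · rw [hwl]; exact h2
      · intro j; rw [hwc]; exact h1 j
    · intro h
      constructor
      · intro j; rw [← h, hwc]
      · rw [← h, hwl]
  · refine Eq.trans hRHS ?_
    refine congrArg₂ (· * ·) rfl ?_
    refine Finset.prod_congr ?_ ?_
    · ext b
      simp only [Finset.mem_filter, Finset.mem_univ, true_and]
    · intro b _
      refine congrArg₂ (· ^ ·) (by congr) ?_
      refine congrArg Finset.card ?_
      ext i
      simp only [Finset.mem_filter, Finset.mem_univ, true_and]
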